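/- Let F be a free group, H ≤ F a subgroup, and g ∈ F \ H. If the intersection gHg⁻¹ ∩ H contains a non-trivial element u which is not a proper power in F and such that u ∈ H, then H is not conjugacy stable in F. -/
import Mathlib


/-- `H` is conjugacy stable in `F`: any two elements of `H` that are conjugate in `F`
are already conjugate by an element of `H`. -/
def ConjugacyStable {F : Type*} [Group F] (H : Subgroup F) : Prop :=
  ∀ u v : F, u ∈ H → v ∈ H → (∃ g : F, g⁻¹ * u * g = v) → ∃ h ∈ H, h⁻¹ * u * h = v

/-- In a free group in which all elements commute, every element is a power of a fixed element. -/
lemma aux_free_comm_cyclic (G : Type*) [Group G] [IsFreeGroup G]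
    (hcomm : ∀ a b : G, a * b = b * a) :
    ∃ z : G, ∀ x : G, ∃ k : ℤ, x = z ^ k := by
  classical
  by_cases hS : Nonempty (IsFreeGroup.Generators G)
  · -- the generators form a subsingleton
    have hsub : Subsingleton (IsFreeGroup.Generators G) := by
      refine ⟨fun a b => ?_⟩
      by_contra hab
      set f : IsFreeGroup.Generators G → Equiv.Perm (Fin 3) :=
        fun x => if x = a then Equiv.swap 0 1 else Equiv.swap 1 2 with hf
      have h1 := hcomm (IsFreeGroup.of a) (IsFreeGroup.of b)
      have h2 := congrArg (IsFreeGroup.lift f) h1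
      simp only [map_mul, IsFreeGroup.lift_of] at h2
      rw [hf] at h2
      simp only [if_pos rfl, if_neg (Ne.symm hab)] at h2
      revert h2
      decide
    obtain ⟨a₀⟩ := hS
    refine ⟨IsFreeGroup.of a₀, fun x => ?_⟩
    set z : G := IsFreeGroup.of a₀ with hz
    set s : IsFreeGroup.Generators G → Subgroup.zpowers z :=
      fun b => ⟨IsFreeGroup.of b, by
        rw [Subsingleton.elim b a₀]; exact Subgroup.mem_zpowers z⟩ with hs
    have hext : (Subgroup.zpowers z).subtype.comp (IsFreeGroup.lift s) = MonoidHom.id G := by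
      apply IsFreeGroup.ext_hom
      intro b
      simp [hs]
    have hx := DFunLike.congr_fun hext x
    simp only [MonoidHom.comp_apply, MonoidHom.id_apply, Subgroup.coe_subtype] at hx
    have hmem : x ∈ Subgroup.zpowers z := by
      rw [← hx]; exact ((IsFreeGroup.lift s) x).2
    obtain ⟨k, hk⟩ := Subgroup.mem_zpowers_iff.mp hmem
    exact ⟨k, hk.symm⟩
  · -- no generators: the group is trivial
    refine ⟨1, fun x => ⟨0, ?_⟩⟩
    set s : IsFreeGroup.Generators G → (⊥ : Subgroup G) :=
      fun b => (hS ⟨b⟩).elim with hs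
    have hext : (⊥ : Subgroup G).subtype.comp (IsFreeGroup.lift s) = MonoidHom.id G := by
      apply IsFreeGroup.ext_hom
      intro b
      exact (hS ⟨b⟩).elim
    have hx := DFunLike.congr_fun hext x
    simp only [MonoidHom.comp_apply, MonoidHom.id_apply, Subgroup.coe_subtype] at hx
    have hmem : x ∈ (⊥ : Subgroup G) := by
      rw [← hx]; exact ((IsFreeGroup.lift s) x).2
    rw [Subgroup.mem_bot] at hmem
    simp [hmem]

/-- In a free group, an element commuting with a non-trivial non-proper-power `u`
is a power of `u`. -/
lemma aux_centralizer {F : Type*} [Group F] [IsFreeGroup F] {u c : F}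
    (hcomm : u * c = c * u) (hu1 : u ≠ 1)
    (hnp : ¬ ∃ a : F, ∃ n : ℕ, 2 ≤ n ∧ u = a ^ n) :
    ∃ k : ℤ, c = u ^ k := by
  classical
  set K : Subgroup F := Subgroup.closure {u, c} with hK
  have huK : u ∈ K := Subgroup.subset_closure (by simp)
  have hcK : c ∈ K := Subgroup.subset_closure (by simp)
  -- K is commutative
  have hKcomm : ∀ x ∈ K, ∀ y ∈ K, x * y = y * x := by
    intro x hx y hy
    refine Subgroup.closure_induction₂
      (p := fun x y _ _ => x * y = y * x) ?_ ?_ ?_ ?_ ?_ ?_ ?_ hx hy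
    · rintro x y (rfl | rfl) (rfl | rfl)
      · rfl
      · exact hcomm
      · exact hcomm.symm
      · rfl
    · intro x _; simp
    · intro x _; simp
    · intro x y zz _ _ _ h1 h2
      exact (Commute.mul_left h1 h2 : Commute (x * y) zz)
    · intro y zz x _ _ _ h1 h2
      exact (Commute.mul_right h1 h2 : Commute x (y * zz))
    · intro x y _ _ h
      exact (Commute.inv_left h : Commute x⁻¹ y)
    · intro x y _ _ h
      exact (Commute.inv_right h : Commute x y⁻¹)
  -- K is a free group (Nielsen-Schreier) in which all elements commute, so cyclic
  obtain ⟨z, hz⟩ := aux_free_comm_cyclic K (fun a b => by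
    ext
    exact hKcomm a a.2 b b.2)
  obtain ⟨m, hm⟩ := hz ⟨u, huK⟩
  obtain ⟨n, hn⟩ := hz ⟨c, hcK⟩
  have hmF : u = (z : F) ^ m := by
    have := congrArg (Subgroup.subtype K) hm
    simpa using this
  have hnF : c = (z : F) ^ n := by
    have := congrArg (Subgroup.subtype K) hn
    simpa using this
  -- analyze |m|
  obtain ⟨nn, habs | habs⟩ : ∃ nn : ℕ, m = nn ∨ m = -nn := ⟨m.natAbs, Int.natAbs_eq m⟩
  · -- m = nn
    have hmF' : u = (z : F) ^ nn := by
      rw [hmF, habs, zpow_natCast]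
    rcases Nat.lt_or_ge nn 2 with hlt | hge
    · interval_cases nn
      · exact absurd (by simpa using hmF') hu1
      · -- u = z
        have hu : u = (z : F) := by simpa using hmF'
        exact ⟨n, by rw [hnF, hu]⟩
    · exact absurd ⟨(z : F), nn, hge, hmF'⟩ hnp
  · -- m = -nn
    have hmF' : u = ((z : F)⁻¹) ^ nn := by
      rw [hmF, habs, zpow_neg, zpow_natCast, inv_pow]
    rcases Nat.lt_or_ge nn 2 with hlt | hge
    · interval_cases nn
      · exact absurd (by simpa using hmF') hu1
      · -- u = z⁻¹
        have hu : (z : F) = u⁻¹ := by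
          have : u = (z : F)⁻¹ := by simpa using hmF'
          rw [this, inv_inv]
        refine ⟨-n, ?_⟩
        rw [hnF, hu, inv_zpow, ← zpow_neg]
    · exact absurd ⟨(z : F)⁻¹, nn, hge, hmF'⟩ hnp

theorem not_conjugacyStable_of_nonPower_in_intersection {F : Type*} [Group F]
    [IsFreeGroup F] (H : Subgroup F) (g : F) (hg : g ∉ H) (u : F) (hu1 : u ≠ 1)
    (huH : u ∈ H) (huconj : g⁻¹ * u * g ∈ H)
    (hnp : ¬ ∃ a : F, ∃ n : ℕ, 2 ≤ n ∧ u = a ^ n) :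
    ¬ ConjugacyStable H := by
  intro hcs
  obtain ⟨h, hH, hconj⟩ := hcs u (g⁻¹ * u * g) huH huconj ⟨g, rfl⟩
  -- g * h⁻¹ commutes with u
  have hcomm : u * (g * h⁻¹) = (g * h⁻¹) * u := by
    have : u * g = g * (h⁻¹ * u * h) * g⁻¹ * g := by rw [hconj]; group
    calc u * (g * h⁻¹) = (u * g) * h⁻¹ := by group
    _ = (g * (h⁻¹ * u * h) * g⁻¹ * g) * h⁻¹ := by rw [← this]
    _ = (g * h⁻¹) * u := by group
  obtain ⟨k, hk⟩ := aux_centralizer hcomm hu1 hnp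
  have : g = u ^ k * h := by
    rw [← hk]; group
  rw [this] at hg
  exact hg (Subgroup.mul_mem H (Subgroup.zpow_mem H huH k) hH)
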